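/- For the Pareto distribution with parameters α > 1 and β > 0, the value recurrence v_{n+1} = v_n + β^α v_n^{1-α}/(α-1) (with v_0 ≥ β) satisfies v_n / n^{1/α} → β·(α/(α-1))^{1/α} as n → ∞. -/

import Mathlib

open Filter Real Finset

/-- For the Pareto distribution with `α > 1`, `β > 0`, the value recurrence
`v_{n+1} = v_n + β^α v_n^{1-α}/(α-1)` with `v_0 ≥ β` satisfies
`v_n / n^{1/α} → β (α/(α-1))^{1/α}`. -/
theorem stmt_4 (α β : ℝ) (hα : 1 < α) (hβ : 0 < β) (v : ℕ → ℝ) (hv0 : β ≤ v 0)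
    (hrec : ∀ n, v (n + 1) = v n + β ^ α * (v n) ^ (1 - α) / (α - 1)) :
    Tendsto (fun n : ℕ => v n / (n : ℝ) ^ (1 / α)) atTop
      (nhds (β * (α / (α - 1)) ^ (1 / α))) := by
  have hα0 : (0:ℝ) < α := lt_trans one_pos hα
  have hα1 : (0:ℝ) < α - 1 := sub_pos.mpr hα
  set c : ℝ := β ^ α / (α - 1) with hc
  have hcpos : 0 < c := div_pos (rpow_pos_of_pos hβ α) hα1
  -- v n ≥ β
  have hvβ : ∀ n, β ≤ v n := by
    intro n; induction n with
    | zero => exact hv0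
    | succ n ih =>
      have hvn : 0 < v n := lt_of_lt_of_le hβ ih
      have h0 : 0 ≤ β ^ α * v n ^ (1 - α) / (α - 1) :=
        div_nonneg (mul_nonneg (rpow_nonneg hβ.le α) (rpow_nonneg hvn.le _)) hα1.le
      rw [hrec n]; linarith
  have hvpos : ∀ n, 0 < v n := fun n => lt_of_lt_of_le hβ (hvβ n)
  set w : ℕ → ℝ := fun n => v n ^ α with hw
  have hwpos : ∀ n, 0 < w n := fun n => rpow_pos_of_pos (hvpos n) α
  set t : ℕ → ℝ := fun n => c / w n with ht
  have htpos : ∀ n, 0 < t n := fun n => div_pos hcpos (hwpos n)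
  have hwt : ∀ n, w n * t n = c := fun n => mul_div_cancel₀ c (hwpos n).ne'
  have hrec1 : ∀ n, v (n + 1) = v n * (1 + t n) := by
    intro n
    rw [hrec n]
    have hv1 : v n ^ (1 - α) = v n / v n ^ α := by
      rw [rpow_sub (hvpos n), rpow_one]
    rw [hv1, ht, hw, hc]
    field_simp
  have hrec' : ∀ n, w (n + 1) = w n * (1 + t n) ^ α := by
    intro n
    show v (n+1) ^ α = v n ^ α * (1 + t n) ^ α
    rw [hrec1 n, mul_rpow (hvpos n).le (by linarith [(htpos n).le])]
  -- Bernoulli lower bound: w (n+1) ≥ w n + α * c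
  have hstep : ∀ n, w n + α * c ≤ w (n + 1) := by
    intro n
    have hB : 1 + α * t n ≤ (1 + t n) ^ α :=
      one_add_mul_self_le_rpow_one_add (by linarith [(htpos n).le]) hα.le
    have := mul_le_mul_of_nonneg_left hB (hwpos n).le
    rw [hrec' n]
    calc w n + α * c = w n * (1 + α * t n) := by
          rw [mul_add, mul_one, mul_comm α (t n), ← mul_assoc, hwt n]; ring
      _ ≤ w n * (1 + t n) ^ α := this
  have hwlb : ∀ n, w 0 + n * (α * c) ≤ w n := by
    intro n; induction n with
    | zero => simp
    | succ n ih =>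
      have := hstep n
      push_cast
      nlinarith
  have hwtop : Tendsto w atTop atTop := by
    apply tendsto_atTop_mono hwlb
    apply tendsto_atTop_add_const_left
    exact Tendsto.atTop_mul_const (by positivity) tendsto_natCast_atTop_atTop
  have httend : Tendsto t atTop (nhds 0) := Tendsto.div_atTop tendsto_const_nhds hwtop
  have httend' : Tendsto t atTop (nhdsWithin 0 {(0:ℝ)}ᶜ) := by
    apply tendsto_nhdsWithin_of_tendsto_nhds_of_eventually_within _ httend
    exact Eventually.of_forall fun n => (htpos n).ne'
  -- derivative of (1+s)^α at 0 is α
  have hderiv : HasDerivAt (fun s : ℝ => (1 + s) ^ α) α 0 := by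
    have h2 : HasDerivAt (fun s : ℝ => 1 + s) 1 (0:ℝ) := (hasDerivAt_id (0:ℝ)).const_add 1
    have h1 : HasDerivAt (fun x : ℝ => x ^ α) (α * (1:ℝ) ^ (α - 1)) ((fun s : ℝ => 1 + s) 0) := by
      simpa using Real.hasDerivAt_rpow_const (x := (1:ℝ)) (p := α) (Or.inl one_ne_zero)
    have h3 := h1.comp (0:ℝ) h2
    simp only [one_rpow, mul_one] at h3
    exact h3
  have hslope : Tendsto (fun s : ℝ => ((1 + s) ^ α - 1) / s) (nhdsWithin 0 {(0:ℝ)}ᶜ)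
      (nhds α) := by
    have := hasDerivAt_iff_tendsto_slope.mp hderiv
    refine this.congr' ?_
    filter_upwards [self_mem_nhdsWithin] with s hs
    simp [slope_def_field, div_eq_inv_mul]
  have hdtend : Tendsto (fun n => w (n + 1) - w n) atTop (nhds (α * c)) := by
    have hcomp := hslope.comp httend'
    have hcomp' : Tendsto (fun n => c * (((1 + t n) ^ α - 1) / t n)) atTop
        (nhds (c * α)) := hcomp.const_mul c
    rw [show α * c = c * α from mul_comm α c]
    refine hcomp'.congr ?_
    intro n
    rw [hrec' n]
    have hwn : w n = c / t n := (eq_div_iff (htpos n).ne').mpr (hwt n)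
    rw [hwn]
    field_simp
  -- Cesàro
  have hces := hdtend.cesaro
  have hsum : ∀ n : ℕ, ∑ i ∈ range n, (w (i + 1) - w i) = w n - w 0 :=
    fun n => Finset.sum_range_sub w n
  have hwn : Tendsto (fun n : ℕ => w n / n) atTop (nhds (α * c)) := by
    have h0 : Tendsto (fun n : ℕ => w 0 / n) atTop (nhds 0) :=
      tendsto_const_div_atTop_nhds_zero_nat (w 0)
    have := hces.add h0
    rw [add_zero] at this
    refine this.congr ?_
    intro n
    rw [hsum n]
    field_simp
    ring
  -- conclude
  have hkey : Tendsto (fun n : ℕ => (w n / n) ^ (1 / α)) atTop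
      (nhds ((α * c) ^ (1 / α))) :=
    hwn.rpow_const (Or.inr (by positivity))
  have hval : (α * c) ^ (1 / α) = β * (α / (α - 1)) ^ (1 / α) := by
    have h1 : α * c = β ^ α * (α / (α - 1)) := by rw [hc]; ring
    have h2 : (β ^ α) ^ (1 / α) = β := by
      rw [← rpow_mul hβ.le, mul_one_div_cancel hα0.ne', rpow_one]
    rw [h1, mul_rpow (rpow_nonneg hβ.le α) (by positivity), h2]
  rw [← hval]
  refine hkey.congr' ?_
  filter_upwards [eventually_ge_atTop 1] with n hn
  have hn0 : (0:ℝ) < (n:ℝ) := by exact_mod_cast hn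
  rw [div_rpow (hwpos n).le hn0.le]
  congr 1
  rw [hw]
  show (v n ^ α) ^ (1/α) = v n
  rw [← rpow_mul (hvpos n).le, mul_one_div_cancel hα0.ne', rpow_one]
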